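/- arXiv:2109.00922 — 4 statements merged into one kernel-verified Lean document; each statement's English description precedes it below -/
import Mathlib

section
/- Let P and Q be probability measures on a measurable space Ω. Then KL(P‖Q) = sup over all bounded measurable functions T : Ω → ℝ of (∫ T dP − log ∫ e^T dQ), where the supremum is taken in the extended reals. (Donsker–Varadhan variational representation of the KL divergence, used in Equation (9) of Theorem 1.) -/
open MeasureTheory Real
open scoped Classical

open Filter
open scoped Topology

lemma clamp_abs_le (a n : ℝ) (hn : 0 ≤ n) : |max (min a n) (-n)| ≤ |a| := by
  refine abs_le.2 ⟨le_trans (le_min (neg_abs_le a) (le_trans (neg_nonpos.2 (abs_nonneg a)) hn)) (le_max_left _ _),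
    max_le (le_trans (min_le_left _ _) (le_abs_self a)) (le_trans (neg_nonpos.2 hn) (abs_nonneg a))⟩

lemma exp_clamp_le (r n : ℝ) (hr : 0 ≤ r) (hn : 0 ≤ n) :
    Real.exp (max (min (Real.log r) n) (-n)) ≤ r + 1 := by
  have h1 : max (min (Real.log r) n) (-n) ≤ max (Real.log r) 0 :=
    max_le (le_trans (min_le_left _ _) (le_max_left _ _)) (le_trans (neg_nonpos.2 hn) (le_max_right _ _))
  refine le_trans (Real.exp_le_exp.2 h1) ?_
  rcases le_total (Real.log r) 0 with h | h
  · rw [max_eq_right h, Real.exp_zero]; linarith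
  · rw [max_eq_left h]
    rcases hr.eq_or_lt with h0 | h0
    · simp [← h0]
    · rw [Real.exp_log h0]; linarith

lemma klDiv_le_dv {Ω : Type*} [MeasurableSpace Ω] (P Q : Measure Ω)
    [IsProbabilityMeasure P] [IsProbabilityMeasure Q] (hPQ : P ≪ Q)
    (hint : Integrable (llr P Q) P) :
    ((∫ x, llr P Q x ∂P : ℝ) : EReal) ≤
      ⨆ T : {T : Ω → ℝ // Measurable T ∧ ∃ C : ℝ, ∀ x, |T x| ≤ C},
        ((∫ x, T.1 x ∂P - Real.log (∫ x, Real.exp (T.1 x) ∂Q) : ℝ) : EReal) := by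
  have hllr_meas : Measurable (llr P Q) := measurable_llr P Q
  have hset : MeasurableSet {x | P.rnDeriv Q x = 0} :=
    Measure.measurable_rnDeriv P Q (measurableSet_singleton 0)
  set Tn : ℕ → Ω → ℝ := fun n x =>
    if P.rnDeriv Q x = 0 then -(n : ℝ) else max (min (llr P Q x) n) (-(n : ℝ)) with hTn
  have hTnm : ∀ n, Measurable (Tn n) := fun n =>
    Measurable.ite hset measurable_const
      ((hllr_meas.min measurable_const).max measurable_const)
  have hTnb : ∀ n x, |Tn n x| ≤ (n : ℝ) := by
    intro n x
    rw [hTn]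
    simp only
    split_ifs with h
    · rw [abs_neg, abs_of_nonneg (Nat.cast_nonneg n)]
    · exact abs_le.2 ⟨le_max_right _ _, max_le (min_le_right _ _)
        (neg_le_self (Nat.cast_nonneg n))⟩
  have hP_pos : ∀ᵐ x ∂P, 0 < P.rnDeriv Q x := Measure.rnDeriv_pos hPQ
  -- ∫ Tn dP → ∫ llr dP
  have h1 : Tendsto (fun n => ∫ x, Tn n x ∂P) atTop (𝓝 (∫ x, llr P Q x ∂P)) := by
    refine tendsto_integral_of_dominated_convergence (fun x => |llr P Q x|)
      (fun n => (hTnm n).aestronglyMeasurable) hint.abs (fun n => ?_) ?_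
    · filter_upwards [hP_pos] with x hx
      rw [hTn]
      simp only
      rw [if_neg hx.ne', Real.norm_eq_abs]
      exact clamp_abs_le _ _ (Nat.cast_nonneg n)
    · filter_upwards [hP_pos] with x hx
      refine Tendsto.congr' ?_ (tendsto_const_nhds (x := llr P Q x))
      rw [EventuallyEq, eventually_atTop]
      refine ⟨⌈|llr P Q x|⌉₊, fun n hn => ?_⟩
      have habs : |llr P Q x| ≤ (n : ℝ) := (Nat.le_ceil _).trans (Nat.cast_le.2 hn)
      rw [hTn]
      simp only
      rw [if_neg hx.ne', min_eq_left ((le_abs_self _).trans habs),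
        max_eq_left (le_trans (neg_le_neg habs) (neg_abs_le _))]
  -- ∫ exp (Tn) dQ → 1
  have h2 : Tendsto (fun n => ∫ x, Real.exp (Tn n x) ∂Q) atTop (𝓝 1) := by
    have hlim : Tendsto (fun n => ∫ x, Real.exp (Tn n x) ∂Q) atTop
        (𝓝 (∫ x, (P.rnDeriv Q x).toReal ∂Q)) := by
      refine tendsto_integral_of_dominated_convergence
        (fun x => (P.rnDeriv Q x).toReal + 1)
        (fun n => ((hTnm n).exp).aestronglyMeasurable)
        ((Measure.integrable_toReal_rnDeriv).add (integrable_const 1))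
        (fun n => ae_of_all _ fun x => ?_) ?_
      · rw [Real.norm_eq_abs, abs_of_nonneg (Real.exp_pos _).le, hTn]
        simp only
        split_ifs with h
        · have : Real.exp (-(n:ℝ)) ≤ 1 := by
            rw [← Real.exp_zero]
            exact Real.exp_le_exp.2 (neg_nonpos.2 (Nat.cast_nonneg n))
          have h0 : (0:ℝ) ≤ (P.rnDeriv Q x).toReal := ENNReal.toReal_nonneg
          linarith
        · rw [llr_def]
          exact exp_clamp_le _ _ ENNReal.toReal_nonneg (Nat.cast_nonneg n)
      · filter_upwards [Measure.rnDeriv_lt_top P Q] with x hx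
        by_cases h0 : P.rnDeriv Q x = 0
        · have heq : (fun n : ℕ => Real.exp (Tn n x)) = fun n : ℕ => Real.exp (-(n:ℝ)) := by
            funext n
            rw [hTn]
            simp only
            rw [if_pos h0]
          rw [heq, h0]
          simp only [ENNReal.toReal_zero]
          have hneg : Tendsto (fun n : ℕ => -(n : ℝ)) atTop atBot :=
            tendsto_neg_atBot_iff.mpr (tendsto_natCast_atTop_atTop)
          exact Real.tendsto_exp_atBot.comp hneg
        · have hrpos : 0 < (P.rnDeriv Q x).toReal :=
            ENNReal.toReal_pos h0 hx.ne
          refine Tendsto.congr' ?_ (tendsto_const_nhds (x := (P.rnDeriv Q x).toReal))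
          rw [EventuallyEq, eventually_atTop]
          refine ⟨⌈|llr P Q x|⌉₊, fun n hn => ?_⟩
          have habs : |llr P Q x| ≤ (n : ℝ) := (Nat.le_ceil _).trans (Nat.cast_le.2 hn)
          rw [hTn]
          simp only
          rw [if_neg h0, min_eq_left ((le_abs_self _).trans habs),
            max_eq_left (le_trans (neg_le_neg habs) (neg_abs_le _)),
            llr_def]
          simp only
          rw [Real.exp_log hrpos]
    rw [Measure.integral_toReal_rnDeriv hPQ, measureReal_def, measure_univ, ENNReal.toReal_one] at hlim
    exact hlim
  have h3 : Tendsto (fun n => Real.log (∫ x, Real.exp (Tn n x) ∂Q)) atTop (𝓝 0) := by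
    have := (Real.continuousAt_log one_ne_zero).tendsto.comp h2
    simpa [Function.comp_def] using this
  have h4 : Tendsto (fun n => ∫ x, Tn n x ∂P - Real.log (∫ x, Real.exp (Tn n x) ∂Q))
      atTop (𝓝 (∫ x, llr P Q x ∂P)) := by
    have := h1.sub h3
    simpa using this
  refine le_of_tendsto (EReal.tendsto_coe.2 h4) (Filter.Eventually.of_forall fun n => ?_)
  exact le_iSup (fun T : {T : Ω → ℝ // Measurable T ∧ ∃ C : ℝ, ∀ x, |T x| ≤ C} =>
    ((∫ x, T.1 x ∂P - Real.log (∫ x, Real.exp (T.1 x) ∂Q) : ℝ) : EReal))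
    ⟨Tn n, hTnm n, ⟨n, hTnb n⟩⟩

lemma dv_le_klDiv {Ω : Type*} [MeasurableSpace Ω] (P Q : Measure Ω)
    [IsProbabilityMeasure P] [IsProbabilityMeasure Q] (hPQ : P ≪ Q)
    (hint : Integrable (llr P Q) P) (T : Ω → ℝ) (hT : Measurable T) (C : ℝ)
    (hC : ∀ x, |T x| ≤ C) :
    ∫ x, T x ∂P - Real.log (∫ x, Real.exp (T x) ∂Q) ≤ ∫ x, llr P Q x ∂P := by
  have hTintP : Integrable T P :=
    (integrable_const C).mono' hT.aestronglyMeasurable (ae_of_all _ fun x => by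
      simpa using hC x)
  have hexpTQ : Integrable (fun x => Real.exp (T x)) Q :=
    (integrable_const (Real.exp C)).mono' (hT.exp).aestronglyMeasurable
      (ae_of_all _ fun x => by
        rw [Real.norm_eq_abs, abs_of_nonneg (Real.exp_pos _).le]
        exact Real.exp_le_exp.2 ((abs_le.1 (hC x)).2))
  have hmeas_g : Measurable fun x => (P.rnDeriv Q x).toReal * Real.exp (T x - llr P Q x) :=
    ((Measure.measurable_rnDeriv P Q).ennreal_toReal).mul ((hT.sub (measurable_llr P Q)).exp)
  have hae : ∀ᵐ x ∂Q, (P.rnDeriv Q x).toReal * Real.exp (T x - llr P Q x) ≤ Real.exp (T x) := by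
    filter_upwards [Measure.rnDeriv_lt_top P Q] with x hx
    rcases (ENNReal.toReal_nonneg : (0:ℝ) ≤ (P.rnDeriv Q x).toReal).eq_or_lt with h0 | h0
    · rw [← h0, zero_mul]; exact (Real.exp_pos _).le
    · rw [llr_def]
      simp only [Real.exp_sub, Real.exp_log h0]
      rw [mul_div_cancel₀]
      exact ne_of_gt h0
  have hgQ : Integrable (fun x => (P.rnDeriv Q x).toReal * Real.exp (T x - llr P Q x)) Q :=
    (integrable_const (Real.exp C)).mono' hmeas_g.aestronglyMeasurable <| by
      filter_upwards [hae] with x hx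
      rw [Real.norm_eq_abs, abs_of_nonneg (mul_nonneg ENNReal.toReal_nonneg (Real.exp_pos _).le)]
      exact le_trans hx (Real.exp_le_exp.2 ((abs_le.1 (hC x)).2))
  have hgP : Integrable (fun x => Real.exp (T x - llr P Q x)) P := by
    rw [← integrable_rnDeriv_smul_iff hPQ]
    simpa [smul_eq_mul] using hgQ
  set Z := ∫ x, Real.exp (T x - llr P Q x) ∂P with hZ
  have hZpos : 0 < Z := integral_exp_pos hgP
  have hZle : Z ≤ ∫ x, Real.exp (T x) ∂Q := by
    rw [hZ, ← integral_rnDeriv_smul hPQ]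
    simp only [smul_eq_mul]
    exact integral_mono_ae hgQ hexpTQ hae
  have hsub : Integrable (fun x => T x - llr P Q x) P := hTintP.sub hint
  have hexpu_eq : (fun x => Real.exp (T x - llr P Q x - Real.log Z))
      = fun x => Real.exp (T x - llr P Q x) / Z := by
    funext x; rw [Real.exp_sub, Real.exp_log hZpos]
  have hexpu_int : Integrable (fun x => Real.exp (T x - llr P Q x - Real.log Z)) P := by
    rw [hexpu_eq]; exact hgP.div_const _
  have hu_int : Integrable (fun x => T x - llr P Q x - Real.log Z) P :=
    hsub.sub (integrable_const _)
  have h1 : ∫ x, (T x - llr P Q x - Real.log Z) ∂P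
      ≤ ∫ x, (Real.exp (T x - llr P Q x - Real.log Z) - 1) ∂P := by
    refine integral_mono hu_int (hexpu_int.sub (integrable_const 1)) fun x => ?_
    have := Real.add_one_le_exp (T x - llr P Q x - Real.log Z)
    simp only [Pi.sub_apply]
    linarith
  have h2 : ∫ x, (Real.exp (T x - llr P Q x - Real.log Z) - 1) ∂P = 0 := by
    rw [integral_sub hexpu_int (integrable_const 1), hexpu_eq, integral_div, ← hZ,
      div_self (ne_of_gt hZpos)]
    simp
  have h3 : ∫ x, (T x - llr P Q x - Real.log Z) ∂P
      = ∫ x, T x ∂P - ∫ x, llr P Q x ∂P - Real.log Z := by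
    rw [integral_sub hsub (integrable_const _), integral_sub hTintP hint, integral_const]
    simp
  have hjensen : ∫ x, T x ∂P - ∫ x, llr P Q x ∂P - Real.log Z ≤ 0 := by
    rw [← h3]; linarith
  have hlog : Real.log Z ≤ Real.log (∫ x, Real.exp (T x) ∂Q) := Real.log_le_log hZpos hZle
  linarith

lemma ereal_isup_top {ι : Sort*} (f : ι → EReal) (h : ∀ M : ℝ, ∃ i, (M : EReal) ≤ f i) :
    ⨆ i, f i = ⊤ := by
  rw [iSup_eq_top]
  intro b hb
  obtain ⟨x, hbx, -⟩ := EReal.exists_between_coe_real hb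
  obtain ⟨i, hi⟩ := h x
  exact ⟨i, lt_of_lt_of_le hbx hi⟩

lemma dv_top_of_not_ac {Ω : Type*} [MeasurableSpace Ω] (P Q : Measure Ω)
    [IsProbabilityMeasure P] [IsProbabilityMeasure Q] (hac : ¬ P ≪ Q) :
    (⨆ T : {T : Ω → ℝ // Measurable T ∧ ∃ C : ℝ, ∀ x, |T x| ≤ C},
      ((∫ x, T.1 x ∂P - Real.log (∫ x, Real.exp (T.1 x) ∂Q) : ℝ) : EReal)) = ⊤ := by
  have h0 : ∃ s, Q s = 0 ∧ P s ≠ 0 := by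
    by_contra h
    push_neg at h
    exact hac fun s hs => h s hs
  obtain ⟨s, hQs, hPs⟩ := h0
  set S := toMeasurable Q s with hS
  have hSm : MeasurableSet S := measurableSet_toMeasurable Q s
  have hQS : Q S = 0 := by rw [hS, measure_toMeasurable]; exact hQs
  have hPS : P S ≠ 0 := fun h => hPs (measure_mono_null (subset_toMeasurable Q s) h)
  have hp : 0 < (P S).toReal :=
    ENNReal.toReal_pos hPS (ne_of_lt (lt_of_le_of_lt prob_le_one ENNReal.one_lt_top))
  apply ereal_isup_top
  intro M
  obtain ⟨n, hn⟩ := exists_nat_ge (M / (P S).toReal)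
  set T : Ω → ℝ := S.indicator fun _ => (n : ℝ) with hT
  have hTm : Measurable T := measurable_const.indicator hSm
  have hTb : ∀ x, |T x| ≤ (n : ℝ) := by
    intro x
    rw [hT]
    by_cases hx : x ∈ S <;> simp [Set.indicator_apply, hx]
  refine ⟨⟨T, hTm, ⟨n, hTb⟩⟩, ?_⟩
  have h1 : ∫ x, T x ∂P = (n : ℝ) * (P S).toReal := by
    rw [hT, integral_indicator_const _ hSm]
    simp [mul_comm, measureReal_def]
  have h2 : ∫ x, Real.exp (T x) ∂Q = 1 := by
    have hae : ∀ᵐ x ∂Q, Real.exp (T x) = 1 := by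
      filter_upwards [measure_eq_zero_iff_ae_notMem.mp hQS] with x hx
      rw [hT, Set.indicator_of_notMem hx, Real.exp_zero]
    rw [integral_congr_ae hae]
    simp
  rw [EReal.coe_le_coe_iff]
  rw [h1, h2, Real.log_one, sub_zero]
  calc M = M / (P S).toReal * (P S).toReal := by field_simp
    _ ≤ (n : ℝ) * (P S).toReal := by
        apply mul_le_mul_of_nonneg_right hn hp.le

lemma neg_part_bound (t : ℝ) (ht : 0 ≤ t) : |t * min (Real.log t) 0| ≤ 1 := by
  rcases eq_or_lt_of_le ht with h0 | h0
  · simp [← h0]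
  · have hm : min (Real.log t) 0 ≤ 0 := min_le_right _ _
    rw [abs_of_nonpos (mul_nonpos_of_nonneg_of_nonpos ht hm), neg_mul_eq_mul_neg]
    rcases le_total 0 (Real.log t) with h | h
    · rw [min_eq_right h]; simp
    · rw [min_eq_left h]
      have : Real.log t⁻¹ ≤ t⁻¹ - 1 := Real.log_le_sub_one_of_pos (inv_pos.2 h0)
      rw [Real.log_inv] at this
      calc t * -Real.log t ≤ t * (t⁻¹ - 1) := by
            apply mul_le_mul_of_nonneg_left _ ht; linarith
        _ = 1 - t := by field_simp
        _ ≤ 1 := by linarith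

lemma exp_min_max_le (r n : ℝ) (hr : 0 ≤ r) (hn : 0 ≤ n) :
    Real.exp (min (max (Real.log r) 0) n) ≤ r + 1 := by
  refine le_trans (Real.exp_le_exp.2 (min_le_left _ _)) ?_
  rcases le_total (Real.log r) 0 with h | h
  · rw [max_eq_right h, Real.exp_zero]; linarith
  · rw [max_eq_left h]
    rcases hr.eq_or_lt with h0 | h0
    · simp [← h0]
    · rw [Real.exp_log h0]; linarith

lemma ereal_isup_top' {ι : Sort*} (f : ι → EReal) (h : ∀ M : ℝ, ∃ i, (M : EReal) ≤ f i) :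
    ⨆ i, f i = ⊤ := by
  rw [iSup_eq_top]
  intro b hb
  obtain ⟨x, hbx, -⟩ := EReal.exists_between_coe_real hb
  obtain ⟨i, hi⟩ := h x
  exact ⟨i, lt_of_lt_of_le hbx hi⟩

lemma dv_top_of_not_int {Ω : Type*} [MeasurableSpace Ω] (P Q : Measure Ω)
    [IsProbabilityMeasure P] [IsProbabilityMeasure Q] (hPQ : P ≪ Q)
    (hni : ¬ Integrable (llr P Q) P) :
    (⨆ T : {T : Ω → ℝ // Measurable T ∧ ∃ C : ℝ, ∀ x, |T x| ≤ C},
      ((∫ x, T.1 x ∂P - Real.log (∫ x, Real.exp (T.1 x) ∂Q) : ℝ) : EReal)) = ⊤ := by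
  have hllr_meas : Measurable (llr P Q) := measurable_llr P Q
  -- negative part is integrable
  have hnegQ : Integrable (fun x => (P.rnDeriv Q x).toReal * min (llr P Q x) 0) Q := by
    refine (integrable_const (1:ℝ)).mono'
      (((Measure.measurable_rnDeriv P Q).ennreal_toReal.mul
        (hllr_meas.min measurable_const)).aestronglyMeasurable) (ae_of_all _ fun x => ?_)
    rw [Real.norm_eq_abs, llr_def]
    exact neg_part_bound _ ENNReal.toReal_nonneg
  have hneg : Integrable (fun x => min (llr P Q x) 0) P := by
    rw [← integrable_rnDeriv_smul_iff hPQ]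
    simpa [smul_eq_mul] using hnegQ
  have hpos_ni : ¬ Integrable (fun x => max (llr P Q x) 0) P := by
    intro h
    apply hni
    have heq : (fun x => max (llr P Q x) 0 + min (llr P Q x) 0) = llr P Q := by
      funext x; rw [max_add_min, add_zero]
    exact (h.add hneg).congr (ae_of_all _ fun x => by
      simp only [Pi.add_apply]
      rw [max_add_min, add_zero])
  have hlint : ∫⁻ x, ENNReal.ofReal (max (llr P Q x) 0) ∂P = ⊤ := by
    by_contra hfin
    apply hpos_ni
    refine ⟨(hllr_meas.max measurable_const).aestronglyMeasurable,
      (hasFiniteIntegral_iff_ofReal (ae_of_all _ fun x => le_max_right _ _)).mpr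
        (lt_top_iff_ne_top.2 hfin)⟩
  -- truncations
  set Tn : ℕ → Ω → ℝ := fun n x => min (max (llr P Q x) 0) (n : ℝ) with hTn
  have hTnm : ∀ n, Measurable (Tn n) := fun n =>
    (hllr_meas.max measurable_const).min measurable_const
  have hTn_nonneg : ∀ n x, 0 ≤ Tn n x := fun n x =>
    le_min (le_max_right _ _) (Nat.cast_nonneg n)
  have hTn_le : ∀ n x, Tn n x ≤ (n : ℝ) := fun n x => min_le_right _ _
  -- lintegral sup is top
  have hsup : (⨆ n, ∫⁻ x, ENNReal.ofReal (Tn n x) ∂P) = ⊤ := by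
    rw [← lintegral_iSup (fun n => (hTnm n).ennreal_ofReal)
      (fun m n hmn x => ENNReal.ofReal_le_ofReal
        (min_le_min (le_refl _) (Nat.cast_le.2 hmn)))]
    rw [← hlint]
    apply lintegral_congr fun x => ?_
    apply le_antisymm
    · exact iSup_le fun n => ENNReal.ofReal_le_ofReal (min_le_left _ _)
    · refine le_iSup_of_le ⌈max (llr P Q x) 0⌉₊ (le_of_eq ?_)
      rw [hTn]
      simp only
      rw [min_eq_left (Nat.le_ceil _)]
  apply ereal_isup_top'
  intro M
  -- pick n with large truncated integral
  have hlt : ENNReal.ofReal (M + Real.log 2) < ⨆ n, ∫⁻ x, ENNReal.ofReal (Tn n x) ∂P := by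
    rw [hsup]; exact ENNReal.ofReal_lt_top.trans_le le_top |>.trans_le le_rfl
  obtain ⟨n, hn⟩ := lt_iSup_iff.mp hlt
  refine ⟨⟨Tn n, hTnm n, ⟨n, fun x => abs_le.2 ⟨by
    linarith [hTn_nonneg n x, Nat.cast_nonneg (α := ℝ) n], hTn_le n x⟩⟩⟩, ?_⟩
  rw [EReal.coe_le_coe_iff]
  -- value of ∫ Tn via lintegral
  have hint_Tn : ∫ x, Tn n x ∂P = (∫⁻ x, ENNReal.ofReal (Tn n x) ∂P).toReal := by
    rw [integral_eq_lintegral_of_nonneg_ae (ae_of_all _ (hTn_nonneg n))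
      (hTnm n).aestronglyMeasurable]
  have hfin_n : ∫⁻ x, ENNReal.ofReal (Tn n x) ∂P ≠ ⊤ := by
    refine ne_of_lt (lt_of_le_of_lt (lintegral_mono fun x =>
      ENNReal.ofReal_le_ofReal (hTn_le n x)) ?_)
    rw [lintegral_const, measure_univ, mul_one]
    exact ENNReal.ofReal_lt_top
  have hMlt : M + Real.log 2 < ∫ x, Tn n x ∂P := by
    rw [hint_Tn]
    rcases le_or_gt 0 (M + Real.log 2) with h | h
    · exact (ENNReal.ofReal_lt_iff_lt_toReal h hfin_n).mp hn
    · exact lt_of_lt_of_le h ENNReal.toReal_nonneg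
  -- log of exp integral is at most log 2
  have hexp_int : Integrable (fun x => Real.exp (Tn n x)) Q :=
    (integrable_const (Real.exp n)).mono' ((hTnm n).exp).aestronglyMeasurable
      (ae_of_all _ fun x => by
        rw [Real.norm_eq_abs, abs_of_nonneg (Real.exp_pos _).le]
        exact Real.exp_le_exp.2 (hTn_le n x))
  have hbound_int : Integrable (fun x => (P.rnDeriv Q x).toReal + 1) Q :=
    (Measure.integrable_toReal_rnDeriv).add (integrable_const 1)
  have hexp_le : ∫ x, Real.exp (Tn n x) ∂Q ≤ 2 := by
    have h1 : ∫ x, Real.exp (Tn n x) ∂Q ≤ ∫ x, ((P.rnDeriv Q x).toReal + 1) ∂Q := by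
      refine integral_mono hexp_int hbound_int fun x => ?_
      rw [hTn]
      simp only
      rw [llr_def]
      exact exp_min_max_le _ _ ENNReal.toReal_nonneg (Nat.cast_nonneg n)
    have h2 : ∫ x, ((P.rnDeriv Q x).toReal + 1) ∂Q = 2 := by
      rw [integral_add Measure.integrable_toReal_rnDeriv (integrable_const 1),
        Measure.integral_toReal_rnDeriv hPQ]
      simp
      norm_num
    linarith
  have hlog2 : Real.log (∫ x, Real.exp (Tn n x) ∂Q) ≤ Real.log 2 :=
    Real.log_le_log (integral_exp_pos hexp_int) hexp_le
  linarith

/-- The Kullback–Leibler divergence between two measures, valued in the extended reals,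
matching Mathlib's `klDiv`: it is `∫ log (dP/dQ) dP` if `P ≪ Q` and the log-likelihood
ratio is `P`-integrable, and `⊤` otherwise. -/

noncomputable def klDiv {Ω : Type*} [MeasurableSpace Ω] (P Q : Measure Ω) : EReal :=
  if P ≪ Q ∧ Integrable (llr P Q) P then ((∫ x, llr P Q x ∂P : ℝ) : EReal) else ⊤

/-- Donsker–Varadhan variational representation: `KL(P‖Q)` equals the supremum over all
bounded measurable `T : Ω → ℝ` of `∫ T dP − log ∫ e^T dQ`, in the extended reals. -/
theorem donsker_varadhan_representation {Ω : Type*} [MeasurableSpace Ω]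
    (P Q : Measure Ω) [IsProbabilityMeasure P] [IsProbabilityMeasure Q] :
    klDiv P Q = ⨆ T : {T : Ω → ℝ // Measurable T ∧ ∃ C : ℝ, ∀ x, |T x| ≤ C},
      ((∫ x, T.1 x ∂P - Real.log (∫ x, Real.exp (T.1 x) ∂Q) : ℝ) : EReal) := by
  by_cases hc : P ≪ Q ∧ Integrable (llr P Q) P
  · simp only [klDiv, if_pos hc]
    refine le_antisymm (klDiv_le_dv P Q hc.1 hc.2) (iSup_le fun T => ?_)
    obtain ⟨hTm, C, hC⟩ := T.2
    exact EReal.coe_le_coe_iff.2 (dv_le_klDiv P Q hc.1 hc.2 T.1 hTm C hC)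
  · simp only [klDiv, if_neg hc]
    by_cases hac : P ≪ Q
    · exact (dv_top_of_not_int P Q hac fun h => hc ⟨hac, h⟩).symm
    · exact (dv_top_of_not_ac P Q hac).symm
end

section
/- Let P and Q be probability measures on a measurable space Ω such that P is not absolutely continuous with respect to Q. Then the supremum over all bounded measurable functions T : Ω → ℝ of (∫ T dP − log ∫ e^T dQ) equals ∞. -/
open MeasureTheory Real
open scoped Classical

/-- If `P` is not absolutely continuous with respect to `Q`, the Donsker–Varadhan supremum
over bounded measurable functions equals `∞`. -/
theorem donsker_varadhan_sup_eq_top_of_not_ac {Ω : Type*} [MeasurableSpace Ω]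
    (P Q : Measure Ω) [IsProbabilityMeasure P] [IsProbabilityMeasure Q]
    (h : ¬ P ≪ Q) :
    (⨆ T : {T : Ω → ℝ // Measurable T ∧ ∃ C : ℝ, ∀ x, |T x| ≤ C},
      ((∫ x, T.1 x ∂P - Real.log (∫ x, Real.exp (T.1 x) ∂Q) : ℝ) : EReal)) = ⊤ := by
  -- extract a bad set
  simp only [Measure.AbsolutelyContinuous] at h
  push_neg at h
  obtain ⟨s, hQs, hPs⟩ := h
  set A := toMeasurable Q s with hA
  have hAmeas : MeasurableSet A := measurableSet_toMeasurable Q s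
  have hQA : Q A = 0 := by rw [hA, measure_toMeasurable]; exact hQs
  have hPA : P A ≠ 0 := fun h0 => hPs (measure_mono_null (subset_toMeasurable Q s) h0)
  have hp : 0 < (P A).toReal := by
    refine ENNReal.toReal_pos hPA (measure_ne_top P A)
  set p := (P A).toReal with hpdef
  -- key: for each c, value of indicator function
  have key : ∀ c : ℝ, ∃ T : {T : Ω → ℝ // Measurable T ∧ ∃ C : ℝ, ∀ x, |T x| ≤ C},
      (∫ x, T.1 x ∂P - Real.log (∫ x, Real.exp (T.1 x) ∂Q) : ℝ) = c * p := by
    intro c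
    refine ⟨⟨A.indicator (fun _ => c), (measurable_const).indicator hAmeas,
      |c|, ?_⟩, ?_⟩
    · intro x
      by_cases hx : x ∈ A <;> simp [Set.indicator, hx, abs_nonneg]
    · have h1 : ∫ x, A.indicator (fun _ => c) x ∂P = c * p := by
        rw [integral_indicator_const c hAmeas]
        simp [hpdef, mul_comm, Measure.real]
      have h2 : ∫ x, Real.exp (A.indicator (fun _ => c) x) ∂Q = 1 := by
        have : (fun x => Real.exp (A.indicator (fun _ => c) x)) =ᵐ[Q] fun _ => 1 := by
          filter_upwards [measure_eq_zero_iff_ae_notMem.mp hQA] with x hx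
          simp [Set.indicator_of_notMem hx]
        rw [integral_congr_ae this]
        simp
      rw [h1, h2, Real.log_one, sub_zero]
  rw [iSup_eq_top]
  intro b hb
  obtain ⟨T, hT⟩ := key ((max b.toReal 0 + 1) / p)
  refine ⟨T, ?_⟩
  rw [hT]
  have hval : (max b.toReal 0 + 1) / p * p = max b.toReal 0 + 1 := by
    field_simp
  rw [hval]
  induction b with
  | bot => exact EReal.bot_lt_coe _
  | coe b =>
      norm_cast
      simp only [EReal.toReal_coe]
      have := le_max_left b 0
      linarith
  | top => exact absurd hb (lt_irrefl _)
end

section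
/- Let Q be a probability measure on a measurable space Ω and let T : Ω → ℝ be a bounded measurable function. Then log ∫ e^T dQ = sup over all probability measures P on Ω with P ≪ Q of (∫ T dP − KL(P‖Q)), and the supremum is attained by the Gibbs measure P* with dP*/dQ = e^T / ∫ e^T dQ. (Gibbs variational principle, the dual form of the Donsker–Varadhan representation.) -/
open MeasureTheory Real
open scoped Classical

lemma integral_llr_nonneg' {Ω : Type*} [MeasurableSpace Ω] {μ ν : Measure Ω}
    [IsProbabilityMeasure μ] [IsProbabilityMeasure ν] (hμν : μ ≪ ν)
    (h_int : Integrable (llr μ ν) μ) : 0 ≤ ∫ x, llr μ ν x ∂μ := by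
  have h_eq : (fun x ↦ exp (- llr μ ν x)) =ᵐ[μ] fun x ↦ (ν.rnDeriv μ x).toReal :=
    exp_neg_llr hμν
  have h_int_exp : Integrable (fun x ↦ exp (- llr μ ν x)) μ :=
    Measure.integrable_toReal_rnDeriv.congr h_eq.symm
  have h_jensen : exp (∫ x, - llr μ ν x ∂μ) ≤ ∫ x, exp (- llr μ ν x) ∂μ :=
    convexOn_exp.map_integral_le continuous_exp.continuousOn isClosed_univ
      (Filter.Eventually.of_forall fun x => trivial) h_int.neg h_int_exp
  have h_le_one : ∫ x, exp (- llr μ ν x) ∂μ ≤ 1 := by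
    rw [integral_congr_ae h_eq]
    calc ∫ x, (ν.rnDeriv μ x).toReal ∂μ ≤ (ν Set.univ).toReal := by
          rw [← setIntegral_univ]
          exact Measure.setIntegral_toReal_rnDeriv_le (measure_ne_top _ _)
      _ = 1 := by simp
  rw [integral_neg] at h_jensen
  have := h_jensen.trans h_le_one
  nlinarith [Real.add_one_le_exp (-∫ x, llr μ ν x ∂μ)]

/-- Gibbs variational principle: for a probability measure `Q` and bounded measurable `T`,
`log ∫ e^T dQ` is the supremum over probability measures `P ≪ Q` of `∫ T dP − KL(P‖Q)`
(read in the extended reals), and the supremum is attained by the Gibbs measure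
`P* = Q.tilted T`, i.e. `dP*/dQ = e^T / ∫ e^T dQ`. -/
theorem gibbs_variational_principle {Ω : Type*} [MeasurableSpace Ω]
    (Q : Measure Ω) [IsProbabilityMeasure Q]
    (T : Ω → ℝ) (hT : Measurable T) (hTbdd : ∃ C : ℝ, ∀ x, |T x| ≤ C) :
    ((Real.log (∫ x, Real.exp (T x) ∂Q) : ℝ) : EReal)
        = ⨆ P : {P : Measure Ω // IsProbabilityMeasure P ∧ P ≪ Q},
            (((∫ x, T x ∂P.1 : ℝ) : EReal) - klDiv P.1 Q) ∧
      (((∫ x, T x ∂(Q.tilted T) : ℝ) : EReal) - klDiv (Q.tilted T) Q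
        = ((Real.log (∫ x, Real.exp (T x) ∂Q) : ℝ) : EReal)) := by
  obtain ⟨C, hC⟩ := hTbdd
  have hexp : Integrable (fun x ↦ exp (T x)) Q := by
    refine (integrable_const (exp C)).mono' hT.exp.aestronglyMeasurable
      (Filter.Eventually.of_forall fun x => ?_)
    rw [norm_of_nonneg (exp_pos _).le]
    exact exp_le_exp.mpr ((abs_le.mp (hC x)).2)
  have hTint : ∀ (P : Measure Ω), IsProbabilityMeasure P → Integrable T P := by
    intro P hP
    exact (integrable_const C).mono' hT.aestronglyMeasurable
      (Filter.Eventually.of_forall fun x => by simpa using hC x)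
  set Z := ∫ x, exp (T x) ∂Q with hZ
  have hPstar : IsProbabilityMeasure (Q.tilted T) := isProbabilityMeasure_tilted hexp
  have hAC : Q.tilted T ≪ Q := tilted_absolutelyContinuous Q T
  have hllr : llr (Q.tilted T) Q =ᵐ[Q.tilted T] fun x ↦ T x - log Z := by
    have h1 : llr (Q.tilted T) Q =ᵐ[Q] fun x ↦ T x - log Z + llr Q Q x :=
      llr_tilted_left Measure.AbsolutelyContinuous.rfl hexp hT.aemeasurable
    have h2 : llr Q Q =ᵐ[Q] fun _ ↦ 0 := by
      filter_upwards [Measure.rnDeriv_self Q] with x hx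
      simp [llr, hx]
    filter_upwards [hAC.ae_le h1, hAC.ae_le h2] with x hx1 hx2
    rw [hx1, hx2, add_zero]
  have hllr_int : Integrable (llr (Q.tilted T) Q) (Q.tilted T) :=
    ((hTint _ hPstar).sub (integrable_const (log Z))).congr hllr.symm
  have hstar_int : ∫ x, llr (Q.tilted T) Q x ∂(Q.tilted T)
      = ∫ x, T x ∂(Q.tilted T) - log Z := by
    rw [integral_congr_ae hllr, integral_sub (hTint _ hPstar) (integrable_const _)]
    simp
  have hkl_star : klDiv (Q.tilted T) Q
      = ((∫ x, T x ∂(Q.tilted T) - log Z : ℝ) : EReal) := by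
    rw [klDiv, if_pos ⟨hAC, hllr_int⟩, hstar_int]
  have part2 : (((∫ x, T x ∂(Q.tilted T) : ℝ) : EReal) - klDiv (Q.tilted T) Q
      = ((log Z : ℝ) : EReal)) := by
    rw [hkl_star, ← EReal.coe_sub]
    norm_num
  refine ⟨le_antisymm ?_ ?_, part2⟩
  · exact le_iSup_of_le ⟨Q.tilted T, hPstar, hAC⟩ (le_of_eq part2.symm)
  · refine iSup_le fun P => ?_
    obtain ⟨P, hP, hPQ⟩ := P
    haveI := hP
    by_cases hint : Integrable (llr P Q) P
    · rw [klDiv, if_pos ⟨hPQ, hint⟩, ← EReal.coe_sub, EReal.coe_le_coe_iff]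
      have hPP : P ≪ Q.tilted T := hPQ.trans (absolutelyContinuous_tilted hexp)
      have key : ∫ x, llr P (Q.tilted T) x ∂P
          = ∫ x, llr P Q x ∂P - ∫ x, T x ∂P + log Z :=
        integral_llr_tilted_right hPQ (hTint P hP) hexp hint
      have h0 : 0 ≤ ∫ x, llr P (Q.tilted T) x ∂P :=
        integral_llr_nonneg' hPP (integrable_llr_tilted_right hPQ (hTint P hP) hint hexp)
      linarith
    · rw [klDiv, if_neg (by tauto)]
      simp [EReal.sub_top]
end

section
/- Let P and Q be probability measures on a measurable space Ω and let T : Ω → ℝ be a measurable function such that T is P-integrable and e^{T−1} is Q-integrable. Then ∫ T dP − ∫ e^{T−1} dQ ≤ KL(P‖Q). (Nguyen–Wainwright–Jordan f-divergence lower bound for the KL divergence, the bound underlying Equation (10) of Theorem 1.) -/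
open MeasureTheory Real
open scoped Classical

lemma nwj_pointwise (u t : ℝ) (hu : 0 ≤ u) :
    u * t - Real.exp (t - 1) ≤ u * Real.log u := by
  rcases hu.eq_or_lt with h | h
  · rw [← h]
    simp [(Real.exp_pos (t - 1)).le]
  · have h1 : t - Real.log u ≤ Real.exp (t - Real.log u - 1) := by
      have := Real.add_one_le_exp (t - Real.log u - 1); linarith
    have h2 : u * Real.exp (t - Real.log u - 1) = Real.exp (t - 1) := by
      nth_rewrite 1 [← Real.exp_log h]
      rw [← Real.exp_add]
      congr 1
      ring
    nlinarith [mul_le_mul_of_nonneg_left h1 hu]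

/-- Nguyen–Wainwright–Jordan f-divergence lower bound for the KL divergence: if `T` is
measurable, `P`-integrable and `e^{T−1}` is `Q`-integrable, then
`∫ T dP − ∫ e^{T−1} dQ ≤ KL(P‖Q)` in the extended reals. -/
theorem nwj_lower_bound {Ω : Type*} [MeasurableSpace Ω]
    (P Q : Measure Ω) [IsProbabilityMeasure P] [IsProbabilityMeasure Q]
    (T : Ω → ℝ) (hT : Measurable T) (hTP : Integrable T P)
    (hTQ : Integrable (fun x => Real.exp (T x - 1)) Q) :
    ((∫ x, T x ∂P - ∫ x, Real.exp (T x - 1) ∂Q : ℝ) : EReal) ≤ klDiv P Q := by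
  rw [klDiv]
  split_ifs with h
  · obtain ⟨hac, hint⟩ := h
    rw [EReal.coe_le_coe_iff]
    have h1 : ∫ x, T x ∂P = ∫ x, (P.rnDeriv Q x).toReal • T x ∂Q :=
      (integral_rnDeriv_smul hac).symm
    have h2 : ∫ x, llr P Q x ∂P = ∫ x, (P.rnDeriv Q x).toReal • llr P Q x ∂Q :=
      (integral_rnDeriv_smul hac).symm
    have hi1 : Integrable (fun x => (P.rnDeriv Q x).toReal • T x) Q :=
      (integrable_rnDeriv_smul_iff hac).mpr hTP
    have hi2 : Integrable (fun x => (P.rnDeriv Q x).toReal • llr P Q x) Q :=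
      (integrable_rnDeriv_smul_iff hac).mpr hint
    rw [h1, h2, ← integral_sub hi1 hTQ]
    refine integral_mono_ae (hi1.sub hTQ) hi2 ?_
    filter_upwards with x
    have hu : (0:ℝ) ≤ (P.rnDeriv Q x).toReal := ENNReal.toReal_nonneg
    simpa [llr, smul_eq_mul] using nwj_pointwise (P.rnDeriv Q x).toReal (T x) hu
  · exact le_top
end
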